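/- Theorem (ℓ₂ strong convexity of the dilatable global entropy). For every x ∈ Q with x_σ > 0 for all σ ∈ Σ, and for every vector m ∈ ℝ^Σ, the Hessian of the dilatable global entropy φ̃ at x satisfies m^⊤ ∇²φ̃(x) m = Σ_{σ∈Σ} w_σ m_σ² / x_σ ≥ ‖m‖₂². In particular, φ̃ is 1-strongly convex with respect to the Euclidean norm on the strictly positive part of Q. -/

import Mathlib

open Finset

theorem quad_aux {ι : Type} [Fintype ι] [DecidableEq ι]
    (c : ι → ℝ) (L : (ι → ℝ) →L[ℝ] ℝ)
    (x : ι → ℝ) (hx : ∀ i, 0 < x i) (m : ι → ℝ) :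
    iteratedFDeriv ℝ 2 (fun y : ι → ℝ => (∑ i, c i * (y i * Real.log (y i))) + L y) x ![m, m]
      = ∑ i, c i * m i ^ 2 / x i := by
  classical
  set f : (ι → ℝ) → ℝ := fun y => (∑ i, c i * (y i * Real.log (y i))) + L y with hf
  set pr : ι → ((ι → ℝ) →L[ℝ] ℝ) := fun i => ContinuousLinearMap.proj i with hpr
  set F : (ι → ℝ) → ((ι → ℝ) →L[ℝ] ℝ) :=
    fun y => (∑ i, (c i * (Real.log (y i) + 1)) • pr i) + L with hFdef
  have hF : ∀ y : ι → ℝ, (∀ i, y i ≠ 0) → HasFDerivAt f (F y) y := by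
    intro y hy
    have hsum : HasFDerivAt (fun z : ι → ℝ => ∑ i, c i * (z i * Real.log (z i)))
        (∑ i, (c i * (Real.log (y i) + 1)) • pr i) y := by
      apply HasFDerivAt.fun_sum
      intro i _
      have h1 : HasFDerivAt (fun z : ι → ℝ => z i * Real.log (z i))
          ((Real.log (y i) + 1) • pr i) y := by
        have := (Real.hasDerivAt_mul_log (hy i)).comp_hasFDerivAt y
          (ContinuousLinearMap.hasFDerivAt (pr i))
        exact this
      have := h1.const_mul (c i)
      rwa [smul_smul] at this
    exact hsum.add (L.hasFDerivAt)
  have hU : IsOpen {y : ι → ℝ | ∀ i, 0 < y i} := by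
    have : {y : ι → ℝ | ∀ i, 0 < y i} = Set.pi Set.univ (fun _ => Set.Ioi (0:ℝ)) := by
      ext y; simp [Set.mem_pi]
    rw [this]
    exact isOpen_set_pi Set.finite_univ (fun i _ => isOpen_Ioi)
  have hmem : {y : ι → ℝ | ∀ i, 0 < y i} ∈ nhds x := hU.mem_nhds hx
  have hev : fderiv ℝ f =ᶠ[nhds x] F := by
    filter_upwards [hmem] with y hy
    exact (hF y (fun i => (hy i).ne')).fderiv
  have hG : HasFDerivAt F
      (∑ i, (((c i * (x i)⁻¹) • pr i).smulRight (pr i))) x := by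
    apply HasFDerivAt.add_const
    apply HasFDerivAt.fun_sum
    intro i _
    have hlog : HasFDerivAt (fun y : ι → ℝ => Real.log (y i)) ((x i)⁻¹ • pr i) x := by
      have := (Real.hasDerivAt_log (hx i).ne').comp_hasFDerivAt x
        (ContinuousLinearMap.hasFDerivAt (pr i))
      exact this
    have h2 : HasFDerivAt (fun y : ι → ℝ => c i * (Real.log (y i) + 1))
        ((c i * (x i)⁻¹) • pr i) x := by
      have := (hlog.add_const 1).const_mul (c i)
      rwa [smul_smul] at this
    exact h2.smul_const (pr i)
  have key : iteratedFDeriv ℝ 2 f x ![m, m]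
      = (∑ i, (((c i * (x i)⁻¹) • pr i).smulRight (pr i))) m m := by
    rw [iteratedFDeriv_two_apply, hev.fderiv_eq, hG.fderiv]
    rfl
  rw [key]
  rw [ContinuousLinearMap.sum_apply, ContinuousLinearMap.sum_apply]
  apply Finset.sum_congr rfl
  intro i _
  simp only [ContinuousLinearMap.smulRight_apply, ContinuousLinearMap.smul_apply,
    ContinuousLinearMap.proj_apply, hpr, smul_eq_mul]
  rw [div_eq_mul_inv]; ring

/-- **ℓ₂ strong convexity of the dilatable global entropy.** For every `x ∈ Q` with all
coordinates strictly positive and every `m`, the Hessian quadratic form of `φ̃` at `x` equals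
`∑ σ, w σ * m σ ^ 2 / x σ`, which is at least `‖m‖₂² = ∑ σ, m σ ^ 2`. -/
theorem dge_l2_strong_convexity
    {J : Type} [Fintype J] [DecidableEq J]
    {A : J → Type} [∀ j, Fintype (A j)] [∀ j, DecidableEq (A j)] [∀ j, Nonempty (A j)]
    (p : J → Option ((j : J) × A j))
    (hwf : WellFounded (fun j' j : J => ∃ a : A j, p j' = some ⟨j, a⟩))
    (γ : J → ℝ) (γ0 : ℝ)
    (hγ : ∀ j : J, γ j = 1 + (Finset.univ : Finset (A j)).sup' Finset.univ_nonempty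
        (fun a => ∑ j' ∈ Finset.univ.filter (fun j' => p j' = some ⟨j, a⟩), γ j'))
    (hγ0 : γ0 = 1 + ∑ j ∈ Finset.univ.filter (fun j : J => p j = none), γ j)
    (w : Option ((j : J) × A j) → ℝ)
    (hw0 : w none = γ0 - ∑ j ∈ Finset.univ.filter (fun j : J => p j = none), γ j)
    (hw : ∀ (j : J) (a : A j),
      w (some ⟨j, a⟩) = γ j - ∑ j' ∈ Finset.univ.filter (fun j' => p j' = some ⟨j, a⟩), γ j')
    (φ : (Option ((j : J) × A j) → ℝ) → ℝ)
    (hφ : φ = fun x => w none * (x none * Real.log (x none))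
      + (∑ j : J, ∑ a : A j, w (some ⟨j, a⟩) * (x (some ⟨j, a⟩) * Real.log (x (some ⟨j, a⟩))))
      + (∑ j : J, γ j * (x (p j) * Real.log ((Fintype.card (A j) : ℝ)))))
    (x : Option ((j : J) × A j) → ℝ)
    (hxpos : ∀ σ, 0 < x σ) (hx1 : x none = 1)
    (hxf : ∀ j : J, ∑ a : A j, x (some ⟨j, a⟩) = x (p j))
    (m : Option ((j : J) × A j) → ℝ) :
    iteratedFDeriv ℝ 2 φ x ![m, m] = ∑ σ, w σ * (m σ) ^ 2 / x σ ∧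
    ∑ σ, w σ * (m σ) ^ 2 / x σ ≥ ∑ σ, (m σ) ^ 2 := by
  classical
  -- rewrite φ into the standard form
  obtain ⟨L, hL⟩ : ∃ L : ((Option ((j : J) × A j)) → ℝ) →L[ℝ] ℝ,
      L = ∑ j : J, (γ j * Real.log ((Fintype.card (A j) : ℝ))) •
        (ContinuousLinearMap.proj (p j) : ((Option ((j : J) × A j)) → ℝ) →L[ℝ] ℝ) := ⟨_, rfl⟩
  have hφ' : φ = fun y : (Option ((j : J) × A j)) → ℝ => (∑ σ, w σ * (y σ * Real.log (y σ))) + L y := by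
    rw [hφ]
    funext y
    have h1 : ∑ σ, w σ * (y σ * Real.log (y σ))
        = w none * (y none * Real.log (y none))
          + ∑ s : (j : J) × A j, w (some s) * (y (some s) * Real.log (y (some s))) := by
      rw [Fintype.sum_option]
    have h2 : ∑ s : (j : J) × A j, w (some s) * (y (some s) * Real.log (y (some s)))
        = ∑ j : J, ∑ a : A j, w (some ⟨j, a⟩) * (y (some ⟨j, a⟩) * Real.log (y (some ⟨j, a⟩))) := by
      rw [← Finset.univ_sigma_univ, Finset.sum_sigma]
    have h3 : L y = ∑ j : J, γ j * (y (p j) * Real.log ((Fintype.card (A j) : ℝ))) := by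
      rw [hL]
      rw [ContinuousLinearMap.sum_apply]
      apply Finset.sum_congr rfl
      intro j _
      simp only [ContinuousLinearMap.smul_apply, ContinuousLinearMap.proj_apply, smul_eq_mul]
      ring
    rw [h1, h2, h3]
  -- bound on x
  have hxle : ∀ σ, x σ ≤ 1 := by
    -- the parent relation is well-founded
    have hirr : ∀ j : J, ¬ Relation.TransGen (fun j' j : J => ∃ a : A j, p j' = some ⟨j, a⟩) j j :=
      fun j h => (hwf.transGen.isIrrefl.irrefl j) h
    have hwf' : WellFounded (fun j'' j : J => ∃ a : A j'', p j = some ⟨j'', a⟩) := by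
      have hsub : Subrelation (fun j'' j : J => ∃ a : A j'', p j = some ⟨j'', a⟩)
          (Relation.TransGen (Function.swap (fun j' j : J => ∃ a : A j, p j' = some ⟨j, a⟩))) := by
        intro u v h
        exact Relation.TransGen.single h
      apply Subrelation.wf hsub
      have : IsIrrefl J (Relation.TransGen
          (Function.swap (fun j' j : J => ∃ a : A j, p j' = some ⟨j, a⟩))) := by
        constructor
        intro j h
        exact hirr j ((Relation.transGen_swap).mp h)
      exact Finite.wellFounded_of_trans_of_irrefl _
    have hstep : ∀ j : J, ∀ a : A j, x (some ⟨j, a⟩) ≤ x (p j) := by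
      intro j a
      rw [← hxf j]
      exact Finset.single_le_sum (f := fun a => x (some ⟨j, a⟩))
        (fun a _ => (hxpos _).le) (Finset.mem_univ a)
    have hparent : ∀ j : J, x (p j) ≤ 1 := by
      intro j
      induction j using hwf'.induction with
      | _ j ih =>
        rcases h : p j with _ | ⟨⟨j'', a⟩⟩
        · rw [hx1]
        · calc x (some ⟨j'', a⟩) ≤ x (p j'') := hstep j'' a
            _ ≤ 1 := ih j'' ⟨a, h⟩
    intro σ
    rcases σ with _ | ⟨⟨j, a⟩⟩
    · rw [hx1]
    · exact le_trans (hstep j a) (hparent j)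
  -- bound on w
  have hwge : ∀ σ, 1 ≤ w σ := by
    intro σ
    rcases σ with _ | ⟨⟨j, a⟩⟩
    · rw [hw0, hγ0]; ring_nf; norm_num
    · rw [hw j a, hγ j]
      have := Finset.le_sup' (fun a => ∑ j' ∈ Finset.univ.filter (fun j' => p j' = some ⟨j, a⟩), γ j')
        (Finset.mem_univ a)
      linarith
  constructor
  · rw [hφ']
    exact quad_aux w L x hxpos m
  · apply Finset.sum_le_sum
    intro σ _
    have hx0 := hxpos σ
    rw [le_div_iff₀ hx0]
    calc m σ ^ 2 * x σ ≤ m σ ^ 2 * 1 := by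
          exact mul_le_mul_of_nonneg_left (hxle σ) (sq_nonneg _)
      _ = 1 * m σ ^ 2 := by ring
      _ ≤ w σ * m σ ^ 2 := mul_le_mul_of_nonneg_right (hwge σ) (sq_nonneg _)
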